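/- If a function f : X → Y between real vector spaces satisfies f(2x+y) + f(2x−y) = 4[f(x+y) + f(x−y)] + 2[f(2x) − 4f(x)] − 6f(y) for all x, y ∈ X, then the map h defined by h(x) = f(2x) − 4f(x) satisfies the quartic functional equation h(x+2y) + h(x−2y) = 4[h(x+y) + h(x−y) + 6h(y)] − 6h(x) for all x, y ∈ X. -/
import Mathlib


theorem stmt_4 {X Y : Type*} [AddCommGroup X] [Module ℝ X] [AddCommGroup Y] [Module ℝ Y]
    (f : X → Y)
    (hf : ∀ x y : X, f ((2:ℝ) • x + y) + f ((2:ℝ) • x - y) =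
      (4:ℝ) • (f (x + y) + f (x - y)) + (2:ℝ) • (f ((2:ℝ) • x) - (4:ℝ) • f x) - (6:ℝ) • f y)
    (h : X → Y) (hh : ∀ x : X, h x = f ((2:ℝ) • x) - (4:ℝ) • f x) :
    ∀ x y : X, h (x + (2:ℝ) • y) + h (x - (2:ℝ) • y) =
      (4:ℝ) • (h (x + y) + h (x - y) + (6:ℝ) • h y) - (6:ℝ) • h x := by
  have f0 : f 0 = 0 := by
    have e := hf 0 0
    simp only [smul_zero, add_zero, sub_zero] at e
    linear_combination (norm := module) ((1/6:ℝ)) • e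
  have even : ∀ z : X, f (-z) = f z := by
    intro z
    have e := hf 0 z
    simp only [smul_zero, zero_add, zero_sub] at e
    linear_combination (norm := module) (-(1/3:ℝ)) • e + (2:ℝ) • f0
  have L3 : ∀ z : X, f ((3:ℝ) • z) = (6:ℝ) • f ((2:ℝ) • z) - (15:ℝ) • f z := by
    intro z
    have e := hf z z
    rw [show (2:ℝ) • z + z = (3:ℝ) • z by module,
        show (2:ℝ) • z - z = z by module,
        show z + z = (2:ℝ) • z by module, sub_self] at e
    linear_combination (norm := module) e + (4:ℝ) • f0
  have L4 : ∀ z : X, f ((4:ℝ) • z) = (20:ℝ) • f ((2:ℝ) • z) - (64:ℝ) • f z := by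
    intro z
    have e := hf z ((2:ℝ) • z)
    rw [show (2:ℝ) • z + (2:ℝ) • z = (4:ℝ) • z by module,
        sub_self,
        show z + (2:ℝ) • z = (3:ℝ) • z by module,
        show z - (2:ℝ) • z = -z by module, even z] at e
    linear_combination (norm := module) e + (4:ℝ) • L3 z - f0
  have LA : ∀ a b : X, (4:ℝ) • f (a + (2:ℝ) • b) + (4:ℝ) • f (a - (2:ℝ) • b) =
      (16:ℝ) • f (a + b) + (16:ℝ) • f (a - b) + (8:ℝ) • f ((2:ℝ) • b)
        - (24:ℝ) • f a - (32:ℝ) • f b := by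
    intro a b
    have h1 := hf a b
    have h2 := hf a ((2:ℝ) • b)
    have h3 := hf b ((2:ℝ) • a)
    rw [show (2:ℝ) • b + (2:ℝ) • a = (2:ℝ) • a + (2:ℝ) • b by module,
        show (2:ℝ) • b - (2:ℝ) • a = -((2:ℝ) • a - (2:ℝ) • b) by module,
        even ((2:ℝ) • a - (2:ℝ) • b),
        show b + (2:ℝ) • a = (2:ℝ) • a + b by module,
        show b - (2:ℝ) • a = -((2:ℝ) • a - b) by module,
        even ((2:ℝ) • a - b)] at h3
    linear_combination (norm := module) (4:ℝ) • h1 - h2 + h3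
  intro x y
  simp only [hh]
  rw [show (2:ℝ) • (x + (2:ℝ) • y) = (2:ℝ) • x + (4:ℝ) • y by module,
      show (2:ℝ) • (x - (2:ℝ) • y) = (2:ℝ) • x - (4:ℝ) • y by module,
      show (2:ℝ) • (x + y) = (2:ℝ) • x + (2:ℝ) • y by module,
      show (2:ℝ) • (x - y) = (2:ℝ) • x - (2:ℝ) • y by module]
  have la2 := LA ((2:ℝ) • x) ((2:ℝ) • y)
  rw [show (2:ℝ) • x + (2:ℝ) • ((2:ℝ) • y) = (2:ℝ) • x + (4:ℝ) • y by module,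
      show (2:ℝ) • x - (2:ℝ) • ((2:ℝ) • y) = (2:ℝ) • x - (4:ℝ) • y by module,
      show (2:ℝ) • ((2:ℝ) • y) = (4:ℝ) • y by module] at la2
  linear_combination (norm := module) (1/4:ℝ) • la2 - LA x y + (2:ℝ) • L4 y
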